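/- For all nonnegative integers m and n and all complex numbers y and z, the sum over k from 0 to n of binomial(n,k) * (-1)^k * (y + z*k)^m equals (-1)^n * n! * the sum over p from 0 to m of binomial(m,p) * S(p,n) * z^p * y^(m-p), where S(p,n) denotes the Stirling number of the second kind. -/

import Mathlib

/-- Stirling numbers of the second kind, via the standard recurrence. -/
def stirling2 : ℕ → ℕ → ℕ
  | 0, 0 => 1
  | 0, _ + 1 => 0
  | _ + 1, 0 => 0
  | m + 1, n + 1 => (n + 1) * stirling2 m (n + 1) + stirling2 m n

lemma keyA (p n : ℕ) :
    ∑ k ∈ Finset.range (n + 1), (n.choose k : ℂ) * (-1) ^ k * (k : ℂ) ^ p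
      = (-1) ^ n * (n.factorial : ℂ) * (stirling2 p n : ℂ) := by
  induction p generalizing n with
  | zero =>
    cases n with
    | zero => simp [stirling2]
    | succ n =>
      simp only [pow_zero, mul_one, stirling2, Nat.cast_zero, mul_zero]
      have h := Int.alternating_sum_range_choose_of_ne (n := n + 1) (by omega)
      have : ((∑ i ∈ Finset.range (n + 2), (-1 : ℤ) ^ i * (n + 1).choose i : ℤ) : ℂ) = 0 := by
        rw [h]; simp
      push_cast at this
      rw [← this]
      exact Finset.sum_congr rfl fun k _ => by ring
  | succ p ih =>
    cases n with
    | zero => simp [stirling2]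
    | succ n =>
      set B : ℂ := ∑ j ∈ Finset.range (n + 1),
        (n.choose j : ℂ) * (-1) ^ j * ((j : ℂ) + 1) ^ p with hBdef
      have h1 : ∑ k ∈ Finset.range (n + 2),
          ((n + 1).choose k : ℂ) * (-1) ^ k * (k : ℂ) ^ (p + 1)
          = -((n : ℂ) + 1) * B := by
        rw [Finset.sum_range_succ']
        push_cast
        simp only [Nat.choose_zero_right, Nat.cast_one, pow_zero, mul_one,
          zero_pow (Nat.succ_ne_zero p), mul_zero, add_zero]
        rw [hBdef, Finset.mul_sum]
        refine Finset.sum_congr rfl fun j _ => ?_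
        have hc : ((n + 1).choose (j + 1) : ℂ) * ((j : ℂ) + 1) = ((n : ℂ) + 1) * (n.choose j : ℂ) := by
          have h0 : (n + 1).choose (j + 1) * (j + 1) = (n + 1) * n.choose j :=
            (Nat.add_one_mul_choose_eq n j).symm
          exact_mod_cast congrArg (Nat.cast : ℕ → ℂ) h0
        linear_combination ((-1 : ℂ) ^ (j + 1) * ((j : ℂ) + 1) ^ p) * hc
      have h2 : ∑ k ∈ Finset.range (n + 2),
          ((n + 1).choose k : ℂ) * (-1) ^ k * (k : ℂ) ^ p
          = (∑ k ∈ Finset.range (n + 1), (n.choose k : ℂ) * (-1) ^ k * (k : ℂ) ^ p) - B := by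
        have hsplit : ∀ k ∈ Finset.range (n + 1),
            ((n + 1).choose (k + 1) : ℂ) * (-1) ^ (k + 1) * ((k : ℂ) + 1) ^ p
            = (n.choose (k + 1) : ℂ) * (-1) ^ (k + 1) * ((k : ℂ) + 1) ^ p
              - (n.choose k : ℂ) * (-1) ^ k * ((k : ℂ) + 1) ^ p := by
          intro k _
          rw [Nat.choose_succ_succ]
          push_cast
          ring
        rw [Finset.sum_range_succ']
        push_cast
        simp only [Nat.choose_zero_right, Nat.cast_one, pow_zero, mul_one, one_mul]
        rw [Finset.sum_congr rfl hsplit, Finset.sum_sub_distrib]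
        have hA : (∑ k ∈ Finset.range (n + 1),
              (n.choose (k + 1) : ℂ) * (-1) ^ (k + 1) * ((k : ℂ) + 1) ^ p)
            + (0 : ℂ) ^ p
            = ∑ k ∈ Finset.range (n + 1), (n.choose k : ℂ) * (-1) ^ k * (k : ℂ) ^ p := by
          have hs := Finset.sum_range_succ'
            (fun k => (n.choose k : ℂ) * (-1) ^ k * (k : ℂ) ^ p) (n + 1)
          rw [Finset.sum_range_succ] at hs
          simp only [Nat.choose_succ_self, Nat.cast_zero, zero_mul, add_zero,
            Nat.choose_zero_right, Nat.cast_one, pow_zero, mul_one, one_mul] at hs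
          push_cast at hs
          linear_combination -hs
        linear_combination hA
      rw [h1]
      have hih1 : ∑ k ∈ Finset.range (n + 2), ((n + 1).choose k : ℂ) * (-1) ^ k * (k : ℂ) ^ p
          = (-1) ^ (n + 1) * ((n + 1).factorial : ℂ) * (stirling2 p (n + 1) : ℂ) := ih (n + 1)
      have hih2 := ih n
      have hB : B = (-1) ^ n * (n.factorial : ℂ) * (stirling2 p n : ℂ)
          - (-1) ^ (n + 1) * ((n + 1).factorial : ℂ) * (stirling2 p (n + 1) : ℂ) := by
        rw [← hih1, ← hih2]
        linear_combination h2
      rw [hB]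
      show _ = (-1) ^ (n + 1) * ((n + 1).factorial : ℂ) * (stirling2 (p + 1) (n + 1) : ℂ)
      rw [show stirling2 (p + 1) (n + 1) = (n + 1) * stirling2 p (n + 1) + stirling2 p n from rfl]
      rw [Nat.factorial_succ]
      push_cast
      ring

theorem binomial_sum_eq_stirling_sum (m n : ℕ) (y z : ℂ) :
    ∑ k ∈ Finset.range (n + 1), (n.choose k : ℂ) * (-1) ^ k * (y + z * k) ^ m
      = (-1) ^ n * (n.factorial : ℂ) *
        ∑ p ∈ Finset.range (m + 1),
          (m.choose p : ℂ) * (stirling2 p n : ℂ) * z ^ p * y ^ (m - p) := by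
  have expand : ∀ k : ℕ, (y + z * (k : ℂ)) ^ m
      = ∑ p ∈ Finset.range (m + 1), (z * (k : ℂ)) ^ p * y ^ (m - p) * (m.choose p : ℂ) := by
    intro k
    rw [add_comm y (z * (k : ℂ))]
    exact add_pow _ _ _
  calc ∑ k ∈ Finset.range (n + 1), (n.choose k : ℂ) * (-1) ^ k * (y + z * k) ^ m
      = ∑ k ∈ Finset.range (n + 1), ∑ p ∈ Finset.range (m + 1),
          (n.choose k : ℂ) * (-1) ^ k * ((z * (k : ℂ)) ^ p * y ^ (m - p) * (m.choose p : ℂ)) := by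
        simp_rw [expand, Finset.mul_sum]
    _ = ∑ p ∈ Finset.range (m + 1), ∑ k ∈ Finset.range (n + 1),
          (n.choose k : ℂ) * (-1) ^ k * ((z * (k : ℂ)) ^ p * y ^ (m - p) * (m.choose p : ℂ)) :=
        Finset.sum_comm
    _ = ∑ p ∈ Finset.range (m + 1), (m.choose p : ℂ) * z ^ p * y ^ (m - p) *
          ∑ k ∈ Finset.range (n + 1), (n.choose k : ℂ) * (-1) ^ k * (k : ℂ) ^ p := by
        refine Finset.sum_congr rfl fun p _ => ?_
        rw [Finset.mul_sum]
        refine Finset.sum_congr rfl fun k _ => ?_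
        rw [mul_pow]
        ring
    _ = (-1) ^ n * (n.factorial : ℂ) *
        ∑ p ∈ Finset.range (m + 1),
          (m.choose p : ℂ) * (stirling2 p n : ℂ) * z ^ p * y ^ (m - p) := by
        simp_rw [keyA]
        rw [Finset.mul_sum]
        exact Finset.sum_congr rfl fun p _ => by ring
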